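/- Let L be a finitely generated abstract group, M an abelian normal subgroup which is the normal closure of a finite set T of right Engel elements of L, and suppose L/M is nilpotent. Then L is nilpotent. -/

import Mathlib

open Subgroup
open scoped commutatorElement

namespace Stmt6Aux

variable {L : Type*} [Group L] {A : Type*} [AddCommGroup A]

def dlt (π : L →* AddMonoid.End A) (x : L) : AddMonoid.End A := π x - 1

variable (π : L →* AddMonoid.End A)

lemma dlt_apply (x : L) (a : A) : dlt π x a = π x a - a := rfl

lemma pi_inv_mul (x : L) : π x⁻¹ * π x = 1 := by
  rw [← map_mul, inv_mul_cancel, map_one]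

lemma pi_mul_inv (x : L) : π x * π x⁻¹ = 1 := by
  rw [← map_mul, mul_inv_cancel, map_one]

lemma dlt_mul (x y : L) : dlt π (x * y) = dlt π x * π y + dlt π y := by
  simp only [dlt, map_mul]; noncomm_ring

lemma dlt_inv (x : L) : dlt π x⁻¹ = -(π x⁻¹ * dlt π x) := by
  simp only [dlt, mul_sub, pi_inv_mul, mul_one]; noncomm_ring

lemma dlt_one : dlt π 1 = 0 := by simp [dlt]

lemma dlt_conj (x y : L) : dlt π x * π y = π y * dlt π (y⁻¹ * x * y) := by
  simp only [dlt, sub_mul, mul_sub, one_mul, mul_one, ← map_mul]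
  congr 2
  group

lemma dlt_pow_conj (x y : L) (n : ℕ) :
    (dlt π x) ^ n * π y = π y * (dlt π (y⁻¹ * x * y)) ^ n := by
  induction n with
  | zero => simp
  | succ n ih => rw [pow_succ, pow_succ, mul_assoc, dlt_conj, ← mul_assoc, ih, mul_assoc]

lemma commute_dlt_pi {z x : L} (h : π z * π x = π x * π z) :
    Commute (dlt π z) (π x) := by
  simp only [dlt, Commute, SemiconjBy, sub_mul, mul_sub, one_mul, mul_one, h]

lemma commute_dlt_dlt {z x : L} (h : π z * π x = π x * π z) :
    Commute (dlt π z) (dlt π x) :=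
  (commute_dlt_pi π h).sub_right (Commute.one_right _)



/-- iterated commutators of weight `n+1` in elements of `S`. -/
def comms (S : Set L) : ℕ → Set L
  | 0 => S
  | n + 1 => Set.image2 (fun c s => ⁅c, s⁆) (comms S n) S

lemma comms_finite {S : Set L} (hS : S.Finite) : ∀ n, (comms S n).Finite
  | 0 => hS
  | n + 1 => Set.Finite.image2 _ (comms_finite hS n) hS

lemma comms_subset_lcs (S : Set L) : ∀ n, comms S n ⊆ (⊤ : Subgroup L).lowerCentralSeries n
  | 0 => fun x _ => mem_top x
  | n + 1 => by
    rintro x ⟨c, hc, s, _, rfl⟩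
    exact commutator_mem_commutator (comms_subset_lcs S n hc) (mem_top s)

lemma mem_lcs_two_step {n : ℕ} {u : L} (hu : u ∈ (⊤ : Subgroup L).lowerCentralSeries (n + 1)) (x : L) :
    ⁅x, u⁆ ∈ (⊤ : Subgroup L).lowerCentralSeries (n + 2) := by
  have : ⁅u, x⁆ ∈ (⊤ : Subgroup L).lowerCentralSeries (n+2) :=
    commutator_mem_commutator hu (mem_top x)
  rw [← commutatorElement_inv]
  exact inv_mem this

/-- Hall-type basis lemma: `γ_n(L)` is generated by weight-`n` commutators in the
generators together with `γ_{n+1}(L)`. -/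
lemma lcs_le_closure_comms_sup {S : Set L} (hS : Subgroup.closure S = ⊤) :
    ∀ n, (⊤ : Subgroup L).lowerCentralSeries n ≤
      Subgroup.closure (comms S n) ⊔ (⊤ : Subgroup L).lowerCentralSeries (n + 1)
  | 0 => by
    rw [Subgroup.lowerCentralSeries_zero, ← hS]
    exact le_trans le_sup_left le_rfl
  | n + 1 => by
    set W := Subgroup.closure (comms S (n+1)) ⊔ (⊤ : Subgroup L).lowerCentralSeries (n + 2) with hW
    have hcl : Subgroup.closure (comms S n) ≤ (⊤ : Subgroup L).lowerCentralSeries n :=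
      (Subgroup.closure_le _).2 (comms_subset_lcs S n)
    -- key : commutators of closure elements with arbitrary elements lie in W
    have key1 : ∀ k ∈ Subgroup.closure (comms S n), ∀ x : L, ⁅k, x⁆ ∈ W := by
      intro k hk
      induction hk using closure_induction with
      | mem k hkm =>
        -- inner induction over x
        intro x
        have hx : x ∈ Subgroup.closure S := by rw [hS]; exact mem_top x
        induction hx using closure_induction with
        | mem s hs =>
          have : ⁅k, s⁆ ∈ comms S (n+1) := ⟨k, hkm, s, hs, rfl⟩
          exact le_sup_left (α := Subgroup L) (subset_closure this)
        | one => simpa using one_mem W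
        | mul x y hx hy ihx ihy =>
          have hky : ⁅k, y⁆ ∈ (⊤ : Subgroup L).lowerCentralSeries (n+1) :=
            commutator_mem_commutator (comms_subset_lcs S n hkm) (mem_top y)
          have h2 : ⁅x, ⁅k, y⁆⁆ ∈ (⊤ : Subgroup L).lowerCentralSeries (n+2) := mem_lcs_two_step hky x
          have : ⁅k, x*y⁆ = ⁅k,x⁆ * (⁅x, ⁅k,y⁆⁆ * ⁅k,y⁆) := by group
          rw [this]
          exact mul_mem ihx (mul_mem (le_sup_right (α := Subgroup L) h2) ihy)
        | inv x hx ihx =>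
          have hkx : ⁅k, x⁆⁻¹ ∈ (⊤ : Subgroup L).lowerCentralSeries (n+1) :=
            inv_mem (commutator_mem_commutator (comms_subset_lcs S n hkm) (mem_top x))
          have h2 : ⁅x⁻¹, ⁅k, x⁆⁻¹⁆ ∈ (⊤ : Subgroup L).lowerCentralSeries (n+2) := mem_lcs_two_step hkx x⁻¹
          have : ⁅k, x⁻¹⁆ = ⁅x⁻¹, ⁅k,x⁆⁻¹⁆ * ⁅k,x⁆⁻¹ := by group
          rw [this]
          exact mul_mem (le_sup_right (α := Subgroup L) h2) (inv_mem ihx)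
      | one => intro x; simpa using one_mem W
      | mul k l hk hl ihk ihl =>
        intro x
        have hlx : ⁅l, x⁆ ∈ (⊤ : Subgroup L).lowerCentralSeries (n+1) :=
          commutator_mem_commutator (hcl hl) (mem_top x)
        have h2 : ⁅k, ⁅l, x⁆⁆ ∈ (⊤ : Subgroup L).lowerCentralSeries (n+2) := mem_lcs_two_step hlx k
        have : ⁅k*l, x⁆ = (⁅k, ⁅l,x⁆⁆ * ⁅l,x⁆) * ⁅k,x⁆ := by group
        rw [this]
        exact mul_mem (mul_mem (le_sup_right (α := Subgroup L) h2) (ihl x)) (ihk x)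
      | inv k hk ihk =>
        intro x
        have hkx : ⁅k, x⁆⁻¹ ∈ (⊤ : Subgroup L).lowerCentralSeries (n+1) :=
          inv_mem (commutator_mem_commutator (hcl hk) (mem_top x))
        have h2 : ⁅k⁻¹, ⁅k, x⁆⁻¹⁆ ∈ (⊤ : Subgroup L).lowerCentralSeries (n+2) := mem_lcs_two_step hkx k⁻¹
        have : ⁅k⁻¹, x⁆ = ⁅k⁻¹, ⁅k,x⁆⁻¹⁆ * ⁅k,x⁆⁻¹ := by group
        rw [this]
        exact mul_mem (le_sup_right (α := Subgroup L) h2) (inv_mem (ihk x))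
    -- now the main bound
    show ⁅(⊤ : Subgroup L).lowerCentralSeries n, ⊤⁆ ≤ W
    rw [Subgroup.commutator_le]
    intro g hg x _
    have hg' : g ∈ Subgroup.closure (comms S n) ⊔ (⊤ : Subgroup L).lowerCentralSeries (n+1) :=
      lcs_le_closure_comms_sup hS n hg
    rw [← SetLike.mem_coe, Subgroup.mul_normal] at hg'
    obtain ⟨k, hk, h, hh, rfl⟩ := hg'
    have hhx : ⁅h, x⁆ ∈ (⊤ : Subgroup L).lowerCentralSeries (n+2) :=
      commutator_mem_commutator hh (mem_top x)
    have hconj : k * ⁅h,x⁆ * k⁻¹ ∈ (⊤ : Subgroup L).lowerCentralSeries (n+2) :=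
      (Subgroup.lowerCentralSeries_normal ⊤ (n+2)).conj_mem _ hhx k
    have : ⁅k*h, x⁆ = (k * ⁅h,x⁆ * k⁻¹) * ⁅k,x⁆ := by group
    rw [this]
    exact mul_mem (le_sup_right (α := Subgroup L) hconj) (key1 k hk x)


universe u v

lemma negpow_cancel {A : Type v} [AddCommGroup A] (f : AddMonoid.End A) (a : A) (n : ℕ)
    (h : ((-f) ^ n) a = 0) : (f ^ n) a = 0 := by
  rw [neg_pow] at h
  rcases Nat.even_or_odd n with he | ho
  · rwa [he.neg_one_pow, one_mul] at h
  · rw [ho.neg_one_pow] at h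
    have h4 : ((-1 : AddMonoid.End A) * f ^ n) a = -((f ^ n) a) := rfl
    rw [h4, neg_eq_zero] at h
    exact h

lemma core : ∀ (c : ℕ) {L : Type u} [Group L] {A : Type v} [AddCommGroup A]
    (π : L →* AddMonoid.End A)
    (S : Set L) (_hS : Subgroup.closure S = ⊤) (_hSfin : S.Finite)
    (T' : Set A) (_hT'fin : T'.Finite)
    (_hgen : AddSubgroup.closure {b | ∃ t ∈ T', ∃ x : L, b = π x t} = ⊤)
    (_hE : ∀ (a : A) (x : L), ∃ n : ℕ, ((dlt π x) ^ n) a = 0)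
    (_hc : ∀ g ∈ (⊤ : Subgroup L).lowerCentralSeries c, π g = 1),
    ∃ k : ℕ, ∀ xs : List L, xs.length = k → (xs.map (dlt π)).prod = 0 := by
  intro c
  induction c with
  | zero =>
    intro L _ A _ π S hS hSfin T' hT'fin hgen hE hc
    refine ⟨1, ?_⟩
    intro xs hxs
    obtain ⟨x, rfl⟩ := List.length_eq_one_iff.mp hxs
    have : π x = 1 := hc x (by rw [Subgroup.lowerCentralSeries_zero]; exact mem_top x)
    simp [dlt, this]
  | succ c IH =>
    intro L _ A _ π S hS hSfin T' hT'fin hgen hE hc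
    classical
    -- the central elements
    set Z : Set L := comms S c with hZ
    have hZlcs : Z ⊆ (⊤ : Subgroup L).lowerCentralSeries c := comms_subset_lcs S c
    have hZfin : Z.Finite := comms_finite hSfin c
    -- commuting action of `γ_c`
    have hcomm : ∀ z ∈ (⊤ : Subgroup L).lowerCentralSeries c, ∀ x : L, π z * π x = π x * π z := by
      intro z hz x
      have h1 : π z * π x * π z⁻¹ * π x⁻¹ = 1 := by
        rw [← map_mul, ← map_mul, ← map_mul]
        exact hc _ (commutator_mem_commutator hz (mem_top x))
      have h2 : π z * π x * π z⁻¹ = π x := by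
        have := congrArg (fun u => u * π x) h1
        simpa [mul_assoc, pi_inv_mul] using this
      have := congrArg (fun u => u * π z) h2
      simpa [mul_assoc, pi_inv_mul] using this
    -- the submodule B = J·A
    set B : AddSubgroup A :=
      AddSubgroup.closure {b | ∃ z ∈ Z, ∃ a : A, b = dlt π z a} with hB
    have hBpi : ∀ (x : L), ∀ b ∈ B, π x b ∈ B := by
      intro x b hb
      induction hb using AddSubgroup.closure_induction with
      | mem b hbm =>
        obtain ⟨z, hz, a, rfl⟩ := hbm
        have h' : π x * dlt π z = dlt π z * π x :=
          ((commute_dlt_pi π (hcomm z (hZlcs hz) x)).symm).eq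
        have hx2 : π x (dlt π z a) = dlt π z (π x a) := DFunLike.congr_fun h' a
        rw [hx2]
        exact AddSubgroup.subset_closure ⟨z, hz, π x a, rfl⟩
      | zero => simpa using zero_mem B
      | add b₁ b₂ _ _ ih₁ ih₂ => rw [map_add]; exact add_mem ih₁ ih₂
      | neg b _ ih => rw [map_neg]; exact neg_mem ih
    have hword : ∀ g ∈ Subgroup.closure Z, ∀ a : A, dlt π g a ∈ B := by
      intro g hg
      induction hg using closure_induction with
      | mem z hz => exact fun a => AddSubgroup.subset_closure ⟨z, hz, a, rfl⟩
      | one => intro a; rw [dlt_one]; simpa using zero_mem B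
      | mul u v _ _ ihu ihv =>
        intro a
        rw [dlt_mul]
        exact add_mem (ihu (π v a)) (ihv a)
      | inv u _ ihu =>
        intro a
        rw [dlt_inv]
        have : (-(π u⁻¹ * dlt π u)) a = -(π u⁻¹ (dlt π u a)) := rfl
        rw [this]
        exact neg_mem (hBpi u⁻¹ _ (ihu a))
    have hgc : ∀ g ∈ (⊤ : Subgroup L).lowerCentralSeries c, ∀ a : A, dlt π g a ∈ B := by
      intro g hg a
      have hg' : g ∈ Subgroup.closure Z ⊔ (⊤ : Subgroup L).lowerCentralSeries (c+1) :=
        lcs_le_closure_comms_sup hS c hg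
      rw [← SetLike.mem_coe, Subgroup.mul_normal] at hg'
      obtain ⟨k, hk, h, hh, rfl⟩ := hg'
      have h0 : dlt π h = 0 := by rw [dlt, hc h hh]; exact sub_self 1
      have : dlt π (k * h) = dlt π k := by
        rw [dlt_mul, h0, hc h hh, add_zero, mul_one]
      rw [this]
      exact hword k hk a
    -- quotient module A/B
    have hstab : ∀ x : L, B ≤ B.comap (π x) := fun x b hb => hBpi x b hb
    have key : ∀ (x : L) (a : A),
        (QuotientAddGroup.map B B (π x) (hstab x)) ((a : A ⧸ B)) = ((π x a : A) : A ⧸ B) :=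
      fun x a => QuotientAddGroup.map_mk B B (π x) (hstab x) a
    let pq : L →* AddMonoid.End (A ⧸ B) :=
      { toFun := fun x => (QuotientAddGroup.map B B (π x) (hstab x) : AddMonoid.End (A ⧸ B))
        map_one' := by
          apply AddMonoidHom.ext
          intro q
          induction q using QuotientAddGroup.induction_on with
          | H a => rw [key 1 a, map_one]; rfl
        map_mul' := by
          intro x y
          apply AddMonoidHom.ext
          intro q
          induction q using QuotientAddGroup.induction_on with
          | H a =>
            have : (QuotientAddGroup.map B B (π (x*y)) (hstab (x*y)))
                ((a : A ⧸ B)) = ((π (x*y) a : A) : A ⧸ B) := key (x*y) a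
            rw [this, map_mul]
            have : ((π x (π y a) : A) : A ⧸ B)
                = (QuotientAddGroup.map B B (π x) (hstab x))
                  ((QuotientAddGroup.map B B (π y) (hstab y)) ((a : A ⧸ B))) := by
              rw [key y a, key x (π y a)]
            exact this }
    have keyq : ∀ (x : L) (a : A), pq x ((a : A) : A ⧸ B) = ((π x a : A) : A ⧸ B) :=
      fun x a => key x a
    have hdlt : ∀ (x : L) (a : A),
        dlt pq x ((a : A) : A ⧸ B) = ((dlt π x a : A) : A ⧸ B) := by
      intro x a
      have h1 : dlt pq x ((a : A) : A ⧸ B) = pq x ((a:A) : A ⧸ B) - ((a:A) : A ⧸ B) := rfl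
      rw [h1, keyq, dlt_apply, QuotientAddGroup.mk_sub]
    have hchain : ∀ (xs : List L) (a : A),
        ((xs.map (dlt pq)).prod) ((a : A) : A ⧸ B) = (((xs.map (dlt π)).prod a : A) : A ⧸ B) := by
      intro xs
      induction xs with
      | nil => intro a; rfl
      | cons x xs ih =>
        intro a
        have h1 : ((x :: xs).map (dlt pq)).prod ((a : A) : A ⧸ B)
            = dlt pq x (((xs.map (dlt pq)).prod) ((a : A) : A ⧸ B)) := rfl
        have h2 : (((x :: xs).map (dlt π)).prod a : A)
            = dlt π x ((xs.map (dlt π)).prod a) := rfl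
        rw [h1, h2, ih a, hdlt]
    -- hypotheses for the quotient
    have hgen'' : AddSubgroup.closure
        {b | ∃ t ∈ (fun a : A => ((a : A) : A ⧸ B)) '' T', ∃ x : L, b = pq x t} = ⊤ := by
      have hseteq : {b | ∃ t ∈ (fun a : A => ((a : A) : A ⧸ B)) '' T', ∃ x : L, b = pq x t}
          = (fun a : A => ((a : A) : A ⧸ B)) '' {b | ∃ t ∈ T', ∃ x : L, b = π x t} := by
        ext b
        constructor
        · rintro ⟨tq, ⟨t, ht, rfl⟩, x, rfl⟩
          exact ⟨π x t, ⟨t, ht, x, rfl⟩, (keyq x t).symm⟩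
        · rintro ⟨b', ⟨t, ht, x, rfl⟩, rfl⟩
          exact ⟨((t : A) : A ⧸ B), ⟨t, ht, rfl⟩, x, (keyq x t).symm⟩
      rw [hseteq]
      have himg : (fun a : A => ((a : A) : A ⧸ B)) '' {b | ∃ t ∈ T', ∃ x : L, b = π x t}
          = ⇑(QuotientAddGroup.mk' B) '' {b | ∃ t ∈ T', ∃ x : L, b = π x t} := rfl
      rw [himg, ← AddMonoidHom.map_closure, hgen]
      rw [← AddMonoidHom.range_eq_map]
      exact AddMonoidHom.range_eq_top_of_surjective _ (QuotientAddGroup.mk'_surjective B)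
    have hE'' : ∀ (aq : A ⧸ B) (x : L), ∃ n : ℕ, ((dlt pq x) ^ n) aq = 0 := by
      intro aq x
      induction aq using QuotientAddGroup.induction_on with
      | H a =>
        obtain ⟨n, hn⟩ := hE a x
        refine ⟨n, ?_⟩
        have h1 : ((dlt pq x) ^ n) ((a : A) : A ⧸ B) = (((dlt π x ^ n) a : A) : A ⧸ B) := by
          have := hchain (List.replicate n x) a
          simpa [List.map_replicate, List.prod_replicate] using this
        rw [h1, hn]
        rfl
    have hc'' : ∀ g ∈ (⊤ : Subgroup L).lowerCentralSeries c, pq g = 1 := by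
      intro g hg
      apply AddMonoidHom.ext
      intro q
      induction q using QuotientAddGroup.induction_on with
      | H a =>
        have h1 : pq g ((a : A) : A ⧸ B) = ((π g a : A) : A ⧸ B) := keyq g a
        have h2 : (1 : AddMonoid.End (A ⧸ B)) ((a : A) : A ⧸ B) = ((a : A) : A ⧸ B) := rfl
        refine h1.trans (Eq.trans ?_ h2.symm); rw [QuotientAddGroup.eq]
        have h3 : -(π g a) + a = -(dlt π g a) := by rw [dlt_apply]; abel
        rw [h3]
        exact neg_mem (hgc g hg a)
    obtain ⟨k1, hk1⟩ := IH pq S hS hSfin _ (hT'fin.image _) hgen'' hE'' hc''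
    -- length-(k1+1) products of dlt's land in B
    have hk1' : ∀ xs : List L, xs.length = k1 + 1 → ∀ a : A, ((xs.map (dlt π)).prod) a ∈ B := by
      intro xs hxs a
      cases xs with
      | nil => simp at hxs
      | cons x rest =>
        have hrest : rest.length = k1 := by simpa using hxs
        have hq : (((x :: rest).map (dlt pq)).prod) = 0 := by
          rw [List.map_cons, List.prod_cons, hk1 rest hrest, mul_zero]
        have h3 := hchain (x :: rest) a
        rw [hq] at h3
        have h0 : ((((x::rest).map (dlt π)).prod a : A) : A ⧸ B) = 0 := by
          rw [← h3]; rfl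
        exact (QuotientAddGroup.eq_zero_iff _).mp h0
    -- Step 2 : a long enough product of operators `dlt z`, `z ∈ Z`, is zero.
    set Tf : Finset A := hT'fin.toFinset with hTf
    set F : Finset L := hZfin.toFinset with hF
    set cn : A → L → ℕ := fun t z => Classical.choose (hE t z) with hcn
    have hcnspec : ∀ (t : A) (z : L), ((dlt π z) ^ (cn t z)) t = 0 :=
      fun t z => Classical.choose_spec (hE t z)
    set m : L → ℕ := fun z => Tf.sup (fun t => cn t z) with hm
    set N : ℕ := F.sum m + 1 with hN
    have hZcomm' : ∀ z ∈ Z, ∀ x : L, Commute (dlt π z) (dlt π x) :=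
      fun z hz x => commute_dlt_dlt π (hcomm z (hZlcs hz) x)
    have hZcommP : ∀ z ∈ Z, ∀ x : L, Commute (dlt π z) (π x) :=
      fun z hz x => commute_dlt_pi π (hcomm z (hZlcs hz) x)
    -- pull-out lemma
    have POL : ∀ (ws : List L) (z₀ : L), z₀ ∈ Z → (∀ w ∈ ws, w ∈ Z) →
        (ws.map (dlt π)).prod
          = ((ws.filter (fun w => w ≠ z₀)).map (dlt π)).prod *
            (dlt π z₀) ^ ((ws.filter (fun w => w = z₀)).length) := by
      intro ws z₀ hz₀
      induction ws with
      | nil => intro _; simp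
      | cons w ws ih =>
        intro hmem
        have hws : ∀ w' ∈ ws, w' ∈ Z := fun w' h => hmem w' (List.mem_cons_of_mem _ h)
        by_cases hw : w = z₀
        · subst hw
          rw [List.map_cons, List.prod_cons, ih hws]
          rw [List.filter_cons_of_neg (by simp), List.filter_cons_of_pos (by simp)]
          have hco : Commute (dlt π w) (((ws.filter (fun w' => w' ≠ w)).map (dlt π)).prod) := by
            apply Commute.list_prod_right
            intro u hu
            obtain ⟨w', hw', rfl⟩ := List.mem_map.mp hu
            exact hZcomm' w hz₀ w'
          rw [← mul_assoc, hco.eq, mul_assoc, List.length_cons, pow_succ']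
        · rw [List.map_cons, List.prod_cons, ih hws]
          rw [List.filter_cons_of_pos (by simpa using hw), List.filter_cons_of_neg (by simpa using hw)]
          rw [List.map_cons, List.prod_cons, mul_assoc]
    -- pigeonhole kill lemma
    have KILL : ∀ ws : List L, (∀ w ∈ ws, w ∈ Z) → ws.length = N →
        (ws.map (dlt π)).prod = 0 := by
      intro ws hmem hlen
      have hsum : ∀ (vs : List L), (∀ w ∈ vs, w ∈ Z) →
          vs.length = F.sum (fun z => ((vs.filter (fun w => w = z)).length)) := by
        intro vs
        induction vs with
        | nil => intro _; simp
        | cons w vs ih =>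
          intro hmem'
          have hvs : ∀ w' ∈ vs, w' ∈ Z := fun w' h => hmem' w' (List.mem_cons_of_mem _ h)
          have hwF : w ∈ F := hZfin.mem_toFinset.mpr (hmem' w (List.mem_cons_self))
          have hfc : ∀ z : L, (((w :: vs).filter (fun w' => w' = z)).length)
              = (if w = z then 1 else 0) + ((vs.filter (fun w' => w' = z)).length) := by
            intro z
            by_cases hz : w = z
            · rw [List.filter_cons_of_pos (by simpa using hz), if_pos hz, List.length_cons]
              omega
            · rw [List.filter_cons_of_neg (by simpa using hz), if_neg hz]
              omega
          simp only [hfc]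
          rw [Finset.sum_add_distrib, Finset.sum_ite_eq, if_pos hwF, ← ih hvs,
            List.length_cons]
          omega
      have hpig : ∃ z₀ ∈ F, m z₀ < ((ws.filter (fun w => w = z₀)).length) := by
        by_contra hcon
        push_neg at hcon
        have h5 : ws.length ≤ F.sum m := by
          rw [hsum ws hmem]
          exact Finset.sum_le_sum hcon
        omega
      obtain ⟨z₀, hz₀F, hcount⟩ := hpig
      have hz₀Z : z₀ ∈ Z := hZfin.mem_toFinset.mp hz₀F
      rw [POL ws z₀ hz₀Z hmem]
      set cnt := ((ws.filter (fun w => w = z₀)).length) with hcnt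
      have hDzero : (dlt π z₀) ^ cnt = (0 : AddMonoid.End A) := by
        apply AddMonoidHom.ext
        intro a
        have hin : a ∈ AddSubgroup.closure {b | ∃ t ∈ T', ∃ x : L, b = π x t} := by
          rw [hgen]; trivial
        have h0 : ((dlt π z₀) ^ cnt) a = 0 := by
          induction hin using AddSubgroup.closure_induction with
          | mem b hbm =>
            obtain ⟨t, ht, x, rfl⟩ := hbm
            have hcom : Commute ((dlt π z₀) ^ cnt) (π x) :=
              (hZcommP z₀ hz₀Z x).pow_left cnt
            have h6 : ((dlt π z₀) ^ cnt) (π x t) = π x (((dlt π z₀) ^ cnt) t) :=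
              DFunLike.congr_fun hcom.eq t
            have hnt : cn t z₀ ≤ m z₀ := Finset.le_sup (f := fun t' => cn t' z₀) (hT'fin.mem_toFinset.mpr ht)
            have hsplit : (dlt π z₀) ^ cnt
                = (dlt π z₀) ^ (cnt - cn t z₀) * (dlt π z₀) ^ (cn t z₀) := by
              rw [← pow_add]
              congr 1
              omega
            have h7 : ((dlt π z₀) ^ cnt) t = 0 := by
              rw [hsplit]
              have : ((dlt π z₀) ^ (cnt - cn t z₀) * (dlt π z₀) ^ (cn t z₀)) t
                  = ((dlt π z₀) ^ (cnt - cn t z₀)) (((dlt π z₀) ^ (cn t z₀)) t) := rfl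
              rw [this, hcnspec t z₀, map_zero]
            rw [h6, h7, map_zero]
          | zero => exact map_zero _
          | add b1 b2 _ _ ih1 ih2 => rw [map_add, ih1, ih2, add_zero]
          | neg b _ ih => rw [map_neg, ih, neg_zero]
        exact h0
      rw [hDzero, mul_zero]
    -- Step 3 : the descending chain of subgroups Bm j = J^j · A
    set Bm : ℕ → AddSubgroup A := fun j => AddSubgroup.closure
      {b | ∃ ws : List L, (∀ w ∈ ws, w ∈ Z) ∧ ws.length = j ∧
        ∃ a : A, b = ((ws.map (dlt π)).prod) a} with hBm
    have hBle : B ≤ Bm 1 := by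
      rw [hB]
      apply (AddSubgroup.closure_le _).mpr
      rintro b ⟨z, hz, a, rfl⟩
      refine AddSubgroup.subset_closure ⟨[z], by simpa using hz, by simp, a, ?_⟩
      simp
    have hSTEP : ∀ (j : ℕ) (xs : List L), xs.length = k1 + 1 → ∀ b ∈ Bm j,
        ((xs.map (dlt π)).prod) b ∈ Bm (j+1) := by
      intro j xs hxs b hb
      induction hb using AddSubgroup.closure_induction with
      | mem b hbm =>
        obtain ⟨ws, hwsZ, hwslen, a, rfl⟩ := hbm
        have hPD : Commute ((xs.map (dlt π)).prod) ((ws.map (dlt π)).prod) := by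
          apply Commute.list_prod_right
          intro u hu
          obtain ⟨w, hw, rfl⟩ := List.mem_map.mp hu
          apply Commute.list_prod_left
          intro v hv
          obtain ⟨x, hx, rfl⟩ := List.mem_map.mp hv
          exact (hZcomm' w (hwsZ w hw) x).symm
        have h1 : ((xs.map (dlt π)).prod) (((ws.map (dlt π)).prod) a)
            = ((ws.map (dlt π)).prod) (((xs.map (dlt π)).prod) a) :=
          DFunLike.congr_fun hPD.eq a
        rw [h1]
        have hDB : ∀ b' ∈ B, ((ws.map (dlt π)).prod) b' ∈ Bm (j+1) := by
          intro b' hb'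
          induction hb' using AddSubgroup.closure_induction with
          | mem b' hbm' =>
            obtain ⟨z, hz, a', rfl⟩ := hbm'
            have heq : ((ws ++ [z]).map (dlt π)).prod = (ws.map (dlt π)).prod * dlt π z := by
              rw [List.map_append, List.prod_append]
              simp
            refine AddSubgroup.subset_closure ⟨ws ++ [z], ?_, by simp [hwslen], a', ?_⟩
            · intro w hw
              rcases List.mem_append.mp hw with h | h
              · exact hwsZ w h
              · simpa using (List.mem_singleton.mp h) ▸ hz
            · rw [heq]; rfl
          | zero => simpa using zero_mem _
          | add b1 b2 _ _ ih1 ih2 => rw [map_add]; exact add_mem ih1 ih2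
          | neg b'' _ ih => rw [map_neg]; exact neg_mem ih
        exact hDB _ (hk1' xs hxs a)
      | zero => simpa using zero_mem _
      | add b1 b2 _ _ ih1 ih2 => rw [map_add]; exact add_mem ih1 ih2
      | neg b'' _ ih => rw [map_neg]; exact neg_mem ih
    have hMAIN : ∀ (j : ℕ) (xs : List L), xs.length = (k1+1) * j → ∀ a : A,
        ((xs.map (dlt π)).prod) a ∈ Bm j := by
      intro j
      induction j with
      | zero =>
        intro xs hxs a
        have hnil : xs = [] := List.length_eq_zero_iff.mp (by simpa using hxs)
        subst hnil
        exact AddSubgroup.subset_closure ⟨[], by simp, rfl, a, rfl⟩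
      | succ j ih =>
        intro xs hxs a
        have hlen1 : (xs.take (k1+1)).length = k1 + 1 := by
          rw [List.length_take]
          have : k1 + 1 ≤ xs.length := by rw [hxs, Nat.mul_succ]; omega
          omega
        have hlen2 : (xs.drop (k1+1)).length = (k1+1) * j := by
          rw [List.length_drop, hxs, Nat.mul_succ]
          omega
        have hsplit : xs = xs.take (k1+1) ++ xs.drop (k1+1) := (List.take_append_drop _ xs).symm
        rw [hsplit, List.map_append, List.prod_append]
        exact hSTEP j _ hlen1 _ (ih _ hlen2 a)
    refine ⟨(k1+1) * N, ?_⟩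
    intro xs hxs
    apply AddMonoidHom.ext
    intro a
    have h1 : ((xs.map (dlt π)).prod) a ∈ Bm N := hMAIN N xs hxs a
    have h2 : Bm N ≤ ⊥ := by
      apply (AddSubgroup.closure_le _).mpr
      rintro b ⟨ws, hwsZ, hwslen, a', rfl⟩
      have := KILL ws hwsZ hwslen
      simp [this]
    exact (by simpa using h2 h1 : ((xs.map (dlt π)).prod) a = 0)

end Stmt6Aux

/-- If a finitely generated group `L` has an abelian normal subgroup `M` which is
the normal closure of a finite set `T` of right Engel elements of `L`, and `L/M`
is nilpotent, then `L` is nilpotent. -/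
theorem stmt6 {L : Type*} [Group L] (hFG : Group.FG L) (T : Finset L)
    (hab : ∀ a ∈ Subgroup.normalClosure (T : Set L), ∀ b ∈ Subgroup.normalClosure (T : Set L),
      a * b = b * a)
    (hRE : ∀ t ∈ T, ∀ x : L, ∃ n : ℕ, (fun a => ⁅a, x⁆)^[n] t = 1)
    (hquo : Group.IsNilpotent (L ⧸ Subgroup.normalClosure (T : Set L))) :
    Group.IsNilpotent L := by
  classical
  open Stmt6Aux in
  set M : Subgroup L := Subgroup.normalClosure (T : Set L) with hM
  letI : CommGroup ↥M :=
    { (inferInstance : Group ↥M) with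
      mul_comm := fun a b => Subtype.ext (hab a a.2 b b.2) }
  let A : Type _ := Additive ↥M
  have hconjmem : ∀ (x : L) (m : ↥M), x * ↑m * x⁻¹ ∈ M :=
    fun x m => Subgroup.normalClosure_normal.conj_mem _ m.2 x
  let π : L →* AddMonoid.End A :=
    { toFun := fun x => AddMonoidHom.mk'
        (fun a => Additive.ofMul (⟨x * ↑(Additive.toMul a) * x⁻¹, hconjmem x _⟩ : ↥M))
        (by
          intro a b
          apply congrArg Additive.ofMul
          apply Subtype.ext
          show x * (((Additive.toMul a : ↥M) : L) * ((Additive.toMul b : ↥M) : L)) * x⁻¹ =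
            (x * ((Additive.toMul a : ↥M) : L) * x⁻¹) * (x * ((Additive.toMul b : ↥M) : L) * x⁻¹)
          group)
      map_one' := by
        apply AddMonoidHom.ext
        intro a
        apply congrArg Additive.ofMul
        apply Subtype.ext
        show (1 : L) * ((Additive.toMul a : ↥M) : L) * (1 : L)⁻¹ = ((Additive.toMul a : ↥M) : L)
        group
      map_mul' := by
        intro x y
        apply AddMonoidHom.ext
        intro a
        apply congrArg Additive.ofMul
        apply Subtype.ext
        show (x*y) * ((Additive.toMul a : ↥M) : L) * (x*y)⁻¹
          = x * (y * ((Additive.toMul a : ↥M) : L) * y⁻¹) * x⁻¹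
        group }
  have keyπ : ∀ (x : L) (a : A),
      (↑(Additive.toMul (π x a)) : L) = x * ↑(Additive.toMul a) * x⁻¹ := fun x a => rfl
  -- bridging the Engel condition
  have hsub_apply : ∀ (x : L) (a : A),
      (↑(Additive.toMul (((1 : AddMonoid.End A) - π x) a)) : L)
        = ↑(Additive.toMul a) * (x * ↑(Additive.toMul a) * x⁻¹)⁻¹ := by
    intro x a
    have h1 : ((1 : AddMonoid.End A) - π x) a = a - π x a := rfl
    rw [h1]
    have h2 : Additive.toMul (a - π x a) = Additive.toMul a / Additive.toMul (π x a) := rfl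
    rw [h2]
    rw [div_eq_mul_inv]
    push_cast
    rw [keyπ]
  have hbridge : ∀ (x : L) (n : ℕ) (m : ↥M),
      (fun a => ⁅a, x⁆)^[n] (↑m : L)
        = ↑(Additive.toMul ((((1 : AddMonoid.End A) - π x) ^ n) (Additive.ofMul m))) := by
    intro x n
    induction n with
    | zero => intro m; simp
    | succ n ih =>
      intro m
      rw [Function.iterate_succ_apply]
      have hf : ⁅(↑m : L), x⁆
          = ↑(Additive.toMul (((1 : AddMonoid.End A) - π x) (Additive.ofMul m))) := by
        rw [hsub_apply]
        show ⁅(↑m : L), x⁆ = ↑m * (x * ↑m * x⁻¹)⁻¹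
        group
      rw [hf, ih (Additive.toMul (((1 : AddMonoid.End A) - π x) (Additive.ofMul m)))]
      congr 1
  have hone_sub : ∀ x : L, (1 : AddMonoid.End A) - π x = -(dlt π x) := by
    intro x
    rw [dlt]
    noncomm_ring
  -- Engel condition for elements of T
  have hET : ∀ t (ht : t ∈ T) (x : L), ∃ n : ℕ,
      ((dlt π x) ^ n) (Additive.ofMul (⟨t, Subgroup.subset_normalClosure ht⟩ : ↥M)) = 0 := by
    intro t ht x
    obtain ⟨n, hn⟩ := hRE t ht x
    refine ⟨n, ?_⟩
    set a : A := Additive.ofMul (⟨t, Subgroup.subset_normalClosure ht⟩ : ↥M) with ha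
    have h1 : (fun a => ⁅a, x⁆)^[n] (t : L)
        = ↑(Additive.toMul ((((1 : AddMonoid.End A) - π x) ^ n) a)) :=
      hbridge x n (⟨t, Subgroup.subset_normalClosure ht⟩ : ↥M)
    rw [hn] at h1
    have hm1 : Additive.toMul ((((1 : AddMonoid.End A) - π x) ^ n) a) = (1 : ↥M) := by
      apply Subtype.ext
      rw [← h1]
      rfl
    have h2 : (((1 : AddMonoid.End A) - π x) ^ n) a = 0 := by
      have h3 : (((1 : AddMonoid.End A) - π x) ^ n) a
          = Additive.ofMul (Additive.toMul ((((1 : AddMonoid.End A) - π x) ^ n) a)) := rfl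
      rw [h3, hm1]
      rfl
    rw [hone_sub] at h2
    exact Stmt6Aux.negpow_cancel _ _ _ h2
  -- the set of generators of A as an "L-module"
  let Tset : Set A := {a : A | ((Additive.toMul a : ↥M) : L) ∈ T}
  have hTsetfin : Tset.Finite := by
    have : Tset = (fun a : A => ((Additive.toMul a : ↥M) : L)) ⁻¹' (T : Set L) := rfl
    rw [this]
    apply Set.Finite.preimage _ (T.finite_toSet)
    intro a _ b _ hab'
    exact Additive.toMul.injective (Subtype.ext hab')
  set gens : Set A := {b | ∃ t ∈ Tset, ∃ x : L, b = π x t} with hgens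
  have hgenstab : ∀ (x : L), ∀ b ∈ AddSubgroup.closure gens, π x b ∈ AddSubgroup.closure gens := by
    intro x b hb
    induction hb using AddSubgroup.closure_induction with
    | mem b hbm =>
      obtain ⟨t, ht, y, rfl⟩ := hbm
      have h1 : π x (π y t) = π (x*y) t := (DFunLike.congr_fun (map_mul π x y) t).symm
      rw [h1]
      exact AddSubgroup.subset_closure ⟨t, ht, x*y, rfl⟩
    | zero => simpa using zero_mem _
    | add b1 b2 _ _ ih1 ih2 => rw [map_add]; exact add_mem ih1 ih2
    | neg b' _ ih => rw [map_neg]; exact neg_mem ih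
  -- A is generated by the orbit of Tset
  have hgen : AddSubgroup.closure gens = ⊤ := by
    rw [eq_top_iff]
    intro a _
    let P : Subgroup L :=
      { carrier := {g : L | ∃ hg : g ∈ M, Additive.ofMul (⟨g, hg⟩ : ↥M) ∈ AddSubgroup.closure gens}
        one_mem' := ⟨M.one_mem, by
          have h0 : Additive.ofMul (⟨(1:L), M.one_mem⟩ : ↥M) = 0 := rfl
          rw [h0]; exact zero_mem _⟩
        mul_mem' := by
          rintro g h ⟨hg, hG⟩ ⟨hh, hH⟩
          refine ⟨mul_mem hg hh, ?_⟩
          have h0 : Additive.ofMul (⟨g*h, mul_mem hg hh⟩ : ↥M)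
              = Additive.ofMul (⟨g, hg⟩ : ↥M) + Additive.ofMul (⟨h, hh⟩ : ↥M) := rfl
          rw [h0]; exact add_mem hG hH
        inv_mem' := by
          rintro g ⟨hg, hG⟩
          refine ⟨inv_mem hg, ?_⟩
          have h0 : Additive.ofMul (⟨g⁻¹, inv_mem hg⟩ : ↥M)
              = -(Additive.ofMul (⟨g, hg⟩ : ↥M)) := rfl
          rw [h0]; exact neg_mem hG }
    haveI hPnormal : P.Normal := by
      constructor
      rintro g ⟨hg, hG⟩ x
      refine ⟨hconjmem x ⟨g, hg⟩, ?_⟩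
      have h0 : Additive.ofMul (⟨x*g*x⁻¹, hconjmem x ⟨g, hg⟩⟩ : ↥M)
          = π x (Additive.ofMul (⟨g, hg⟩ : ↥M)) := rfl
      rw [h0]
      exact hgenstab x _ hG
    have hTP : (T : Set L) ⊆ P := by
      intro t ht
      refine ⟨Subgroup.subset_normalClosure ht, ?_⟩
      apply AddSubgroup.subset_closure
      refine ⟨Additive.ofMul (⟨t, Subgroup.subset_normalClosure ht⟩ : ↥M), ?_, 1, ?_⟩
      · show (t : L) ∈ T
        exact ht
      · rw [map_one]
        rfl
    have hMP : M ≤ P := Subgroup.normalClosure_le_normal hTP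
    obtain ⟨hg, hG⟩ := hMP (Additive.toMul a).2
    have he : (⟨((Additive.toMul a : ↥M) : L), hg⟩ : ↥M) = Additive.toMul a := Subtype.ext rfl
    rw [he] at hG
    exact hG
  -- the Engel condition holds for every element of A
  have hEall : ∀ (a : A) (x : L), ∃ n : ℕ, ((dlt π x) ^ n) a = 0 := by
    have hsub : ∀ b ∈ AddSubgroup.closure gens, ∀ x : L, ∃ n : ℕ, ((dlt π x) ^ n) b = 0 := by
      intro b hb
      induction hb using AddSubgroup.closure_induction with
      | mem b hbm =>
        obtain ⟨t, ht, y, rfl⟩ := hbm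
        intro x
        obtain ⟨n, hn⟩ := hET ((Additive.toMul t : ↥M) : L) ht (y⁻¹ * x * y)
        refine ⟨n, ?_⟩
        have h1 : ((dlt π x) ^ n) (π y t) = π y (((dlt π (y⁻¹ * x * y)) ^ n) t) :=
          DFunLike.congr_fun (dlt_pow_conj π x y n) t
        rw [h1]
        have h2 : ((dlt π (y⁻¹ * x * y)) ^ n) t = 0 := hn
        rw [h2, map_zero]
      | zero => intro x; exact ⟨0, rfl⟩
      | add b1 b2 _ _ ih1 ih2 =>
        intro x
        obtain ⟨n, hn⟩ := ih1 x
        obtain ⟨m, hm⟩ := ih2 x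
        refine ⟨m + n, ?_⟩
        rw [map_add]
        have h1 : ((dlt π x) ^ (m + n)) b1 = ((dlt π x) ^ m) (((dlt π x) ^ n) b1) :=
          DFunLike.congr_fun (pow_add (dlt π x) m n) b1
        have h2 : ((dlt π x) ^ (m + n)) b2 = ((dlt π x) ^ n) (((dlt π x) ^ m) b2) := by
          rw [Nat.add_comm m n]
          exact DFunLike.congr_fun (pow_add (dlt π x) n m) b2
        rw [h1, h2, hn, hm, map_zero, map_zero, add_zero]
      | neg b' _ ih =>
        intro x
        obtain ⟨n, hn⟩ := ih x
        exact ⟨n, by rw [map_neg, hn, neg_zero]⟩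
    intro a x
    exact hsub a (by rw [hgen]; trivial) x
  -- the action of γ_c is trivial
  obtain ⟨c, hcq⟩ := Subgroup.nilpotent_iff_lowerCentralSeries.mp hquo
  have hMc : (⊤ : Subgroup L).lowerCentralSeries c ≤ M := by
    intro g hg
    have h1 : (QuotientGroup.mk' M) g ∈
        Subgroup.map (QuotientGroup.mk' M) ((⊤ : Subgroup L).lowerCentralSeries c) :=
      Subgroup.mem_map_of_mem _ hg
    have h2 := Subgroup.lowerCentralSeries.map (QuotientGroup.mk' M) c h1
    rw [hcq] at h2
    have h3 : ((g : L ⧸ M)) = 1 := by simpa using h2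
    exact (QuotientGroup.eq_one_iff g).mp h3
  have hcπ : ∀ g ∈ (⊤ : Subgroup L).lowerCentralSeries c, π g = 1 := by
    intro g hg
    apply AddMonoidHom.ext
    intro a
    have hgM : g ∈ M := hMc hg
    have hval : ((Additive.toMul (π g a) : ↥M) : L) = ((Additive.toMul a : ↥M) : L) := by
      rw [keyπ, hab g hgM _ (Additive.toMul a).2, mul_inv_cancel_right]
    have h5 : Additive.toMul (π g a) = Additive.toMul a := Subtype.ext hval
    exact Additive.toMul.injective h5
  -- generators of L
  obtain ⟨S, hScl, hSfin⟩ := Group.fg_iff.mp hFG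
  -- apply the core lemma
  obtain ⟨k, hk⟩ := Stmt6Aux.core c π S hScl hSfin Tset hTsetfin hgen hEall hcπ
  -- descend the lower central series into annihilated parts
  let V : ℕ → Subgroup L := fun j =>
    { carrier := {g : L | ∃ hg : g ∈ M, ∀ xs : List L, xs.length = k - j →
        ((xs.map (dlt π)).prod) (Additive.ofMul (⟨g, hg⟩ : ↥M)) = 0}
      one_mem' := ⟨M.one_mem, fun xs _ => by
        have h0 : Additive.ofMul (⟨(1:L), M.one_mem⟩ : ↥M) = 0 := rfl
        rw [h0, map_zero]⟩
      mul_mem' := by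
        rintro g h ⟨hg, hG⟩ ⟨hh, hH⟩
        refine ⟨mul_mem hg hh, fun xs hxs => ?_⟩
        have h0 : Additive.ofMul (⟨g*h, mul_mem hg hh⟩ : ↥M)
            = Additive.ofMul (⟨g, hg⟩ : ↥M) + Additive.ofMul (⟨h, hh⟩ : ↥M) := rfl
        rw [h0, map_add, hG xs hxs, hH xs hxs, add_zero]
      inv_mem' := by
        rintro g ⟨hg, hG⟩
        refine ⟨inv_mem hg, fun xs hxs => ?_⟩
        have h0 : Additive.ofMul (⟨g⁻¹, inv_mem hg⟩ : ↥M)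
            = -(Additive.ofMul (⟨g, hg⟩ : ↥M)) := rfl
        rw [h0, map_neg, hG xs hxs, neg_zero] }
  have claim : ∀ j : ℕ, j ≤ k → (⊤ : Subgroup L).lowerCentralSeries (c + j) ≤ V j := by
    intro j
    induction j with
    | zero =>
      intro _ g hg
      refine ⟨hMc hg, fun xs hxs => ?_⟩
      have h0 := hk xs (by simpa using hxs)
      exact DFunLike.congr_fun h0 _
    | succ j ih =>
      intro hjk
      have hstep : (⊤ : Subgroup L).lowerCentralSeries (c + (j+1)) ≤ ⁅V j, (⊤ : Subgroup L)⁆ := by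
        have h1 : (⊤ : Subgroup L).lowerCentralSeries (c + (j+1))
            = ⁅(⊤ : Subgroup L).lowerCentralSeries (c + j), (⊤ : Subgroup L)⁆ := by
          rw [Nat.add_succ]
          rfl
        rw [h1]
        exact Subgroup.commutator_mono (ih (Nat.le_of_succ_le hjk)) le_rfl
      refine le_trans hstep ?_
      rw [Subgroup.commutator_le]
      rintro g ⟨hgM, hgP⟩ x _
      have hmem : ⁅g, x⁆ ∈ M := by
        have h2 : ⁅g, x⁆ = g * (x * g⁻¹ * x⁻¹) := by group
        rw [h2]
        exact mul_mem hgM (hconjmem x ⟨g⁻¹, inv_mem hgM⟩)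
      refine ⟨hmem, fun xs hxs => ?_⟩
      have hval : ((Additive.toMul (((1 : AddMonoid.End A) - π x)
          (Additive.ofMul (⟨g, hgM⟩ : ↥M))) : ↥M) : L) = ⁅g, x⁆ := by
        rw [hsub_apply]
        show g * (x * g * x⁻¹)⁻¹ = ⁅g, x⁆
        group
      have heq : Additive.ofMul (⟨⁅g, x⁆, hmem⟩ : ↥M)
          = ((1 : AddMonoid.End A) - π x) (Additive.ofMul (⟨g, hgM⟩ : ↥M)) :=
        congrArg Additive.ofMul (Subtype.ext hval.symm)
      rw [heq, hone_sub]
      have h7 : ((-(dlt π x)) (Additive.ofMul (⟨g, hgM⟩ : ↥M)))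
          = -(dlt π x (Additive.ofMul (⟨g, hgM⟩ : ↥M))) := rfl
      rw [h7, map_neg]
      have h8 : ((xs ++ [x]).map (dlt π)).prod = (xs.map (dlt π)).prod * dlt π x := by
        rw [List.map_append, List.prod_append]
        simp
      have h9 : ((xs.map (dlt π)).prod) (dlt π x (Additive.ofMul (⟨g, hgM⟩ : ↥M)))
          = (((xs ++ [x]).map (dlt π)).prod) (Additive.ofMul (⟨g, hgM⟩ : ↥M)) := by
        rw [h8]
        rfl
      rw [h9, hgP (xs ++ [x]) (by simp [hxs]; omega), neg_zero]
  have hfinal : (⊤ : Subgroup L).lowerCentralSeries (c + k) = ⊥ := by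
    rw [eq_bot_iff]
    intro g hg
    obtain ⟨hgM, hprop⟩ := claim k le_rfl hg
    have h9 := hprop [] (by simp)
    have h10 : Additive.ofMul (⟨g, hgM⟩ : ↥M) = 0 := h9
    have h11 : (⟨g, hgM⟩ : ↥M) = 1 := Additive.ofMul.injective h10
    have h12 : g = 1 := congrArg Subtype.val h11
    rw [Subgroup.mem_bot]
    exact h12
  exact Subgroup.nilpotent_iff_lowerCentralSeries.mpr ⟨c + k, hfinal⟩
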